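/- Let I ⊆ ℂ[x_1,…,x_n] be a saturated binomial ideal, let T = T(I) := {a ∈ ℤ_{≥0}^n | x^a ∉ I}, and let K = K(I). For q ∈ ℤ^n/K set T_q := {a ∈ T | a mod K = q}. Then for every g ∈ ℤ_{≥0}^n and every q ∈ ℤ^n/K, either (g + T_q) ∩ T = ∅ or g + T_q ⊆ T. -/
import Mathlib


open MvPolynomial

def vsupp {n : ℕ} (a : Fin n → ℕ) : Set (Fin n) := {i | a i ≠ 0}

def vcell {n : ℕ} (l : Set (Fin n)) : Set (Fin n → ℕ) := {a | vsupp a ⊆ l}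

def vslice {n : ℕ} (r : Fin n → ℕ) (l : Set (Fin n)) : Set (Fin n → ℕ) :=
  (fun a => r + a) '' vcell l

def IsStdPair {n : ℕ} (T : Set (Fin n → ℕ)) (r : Fin n → ℕ) (l : Set (Fin n)) : Prop :=
  Disjoint (vsupp r) l ∧ vslice r l ⊆ T ∧
    ∀ (r' : Fin n → ℕ) (l' : Set (Fin n)), Disjoint (vsupp r') l' → vslice r' l' ⊆ T →
      vslice r l ⊆ vslice r' l' → vslice r l = vslice r' l'

def DownClosed {n : ℕ} (T : Set (Fin n → ℕ)) : Prop :=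
  ∀ a b : Fin n → ℕ, (∀ i, b i ≤ a i) → a ∈ T → b ∈ T

def vtoZ {n : ℕ} (a : Fin n → ℕ) : Fin n → ℤ := fun i => (a i : ℤ)

def fiber {n : ℕ} (K : AddSubgroup (Fin n → ℤ)) (S : Set (Fin n → ℕ))
    (q : (Fin n → ℤ) ⧸ K) : Set (Fin n → ℕ) :=
  {a ∈ S | (QuotientAddGroup.mk (vtoZ a) : (Fin n → ℤ) ⧸ K) = q}

def PropII {n : ℕ} (K : AddSubgroup (Fin n → ℤ)) (T : Set (Fin n → ℕ)) : Prop :=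
  ∀ (g : Fin n → ℕ) (q : (Fin n → ℤ) ⧸ K),
    ((fun a => g + a) '' fiber K T q) ∩ T = ∅ ∨ ((fun a => g + a) '' fiber K T q) ⊆ T

noncomputable def xmono {n : ℕ} (a : Fin n → ℕ) : MvPolynomial (Fin n) ℂ :=
  monomial (Finsupp.equivFunOnFinite.symm a) 1

def TofI {n : ℕ} (I : Ideal (MvPolynomial (Fin n) ℂ)) : Set (Fin n → ℕ) :=
  {a | xmono a ∉ I}

def IsBinomialIdeal {n : ℕ} (I : Ideal (MvPolynomial (Fin n) ℂ)) : Prop :=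
  ∃ S : Set (MvPolynomial (Fin n) ℂ), I = Ideal.span S ∧
    ∀ f ∈ S, ∃ (a b : Fin n → ℕ) (la lb : ℂ), f = la • xmono a - lb • xmono b

def KofI {n : ℕ} (I : Ideal (MvPolynomial (Fin n) ℂ)) : AddSubgroup (Fin n → ℤ) :=
  AddSubgroup.closure {v | ∃ a ∈ TofI I, ∃ b ∈ TofI I,
    (∃ la lb : ℂ, la ≠ 0 ∧ lb ≠ 0 ∧ la • xmono a - lb • xmono b ∈ I) ∧ v = vtoZ a - vtoZ b}

def IsSaturated {n : ℕ} (I : Ideal (MvPolynomial (Fin n) ℂ)) : Prop :=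
  IsBinomialIdeal I ∧ ∀ a ∈ TofI I, ∀ b ∈ TofI I, vtoZ a - vtoZ b ∈ KofI I →
    ∃ la lb : ℂ, la ≠ 0 ∧ lb ≠ 0 ∧ la • xmono a - lb • xmono b ∈ I

def Tl {n : ℕ} (T : Set (Fin n → ℕ)) (l : Set (Fin n)) : Set (Fin n → ℕ) :=
  {a | ∃ r, IsStdPair T r l ∧ a ∈ vslice r l}

def Tlbar {n : ℕ} (T : Set (Fin n → ℕ)) (l : Set (Fin n)) : Set (Fin n → ℕ) :=
  {a | ∃ r r', (∀ i, r i ≤ r' i) ∧ IsStdPair T r' l ∧ a ∈ vslice r l}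

def IsMonomialIdeal {n : ℕ} (I : Ideal (MvPolynomial (Fin n) ℂ)) : Prop :=
  ∃ S : Set (Fin n → ℕ), I = Ideal.span (xmono '' S)

def wdeg {n d : ℕ} (M : Matrix (Fin d) (Fin n) ℤ) (m : Fin n →₀ ℕ) : Fin d → ℤ :=
  M.mulVec fun i => (m i : ℤ)

noncomputable def homogComp {n d : ℕ} (M : Matrix (Fin d) (Fin n) ℤ) (q : Fin d → ℤ)
    (f : MvPolynomial (Fin n) ℂ) : MvPolynomial (Fin n) ℂ :=
  ∑ m ∈ f.support, if wdeg M m = q then monomial m (f.coeff m) else 0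

noncomputable def degPart {n d : ℕ} (M : Matrix (Fin d) (Fin n) ℤ)
    (I : Ideal (MvPolynomial (Fin n) ℂ)) (q : Fin d → ℤ) :
    Submodule ℂ (MvPolynomial (Fin n) ℂ ⧸ I) :=
  Submodule.span ℂ ((Ideal.Quotient.mk I) '' {f | ∀ m ∈ f.support, wdeg M m = q})

def IsAGraded {n d : ℕ} (M : Matrix (Fin d) (Fin n) ℤ)
    (I : Ideal (MvPolynomial (Fin n) ℂ)) : Prop :=
  (∀ f ∈ I, ∀ q : Fin d → ℤ, homogComp M q f ∈ I) ∧
  ∀ q : Fin d → ℤ,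
    (q ∈ Set.range (fun a : Fin n → ℕ => M.mulVec (vtoZ a)) →
      Module.finrank ℂ (degPart M I q) = 1) ∧
    (q ∉ Set.range (fun a : Fin n → ℕ => M.mulVec (vtoZ a)) →
      Module.finrank ℂ (degPart M I q) = 0)

noncomputable def htI {R : Type*} [CommRing R] (P : Ideal R) : ℕ∞ :=
  ⨆ (h : P.IsPrime), Order.height (⟨P, h⟩ : PrimeSpectrum R)

/-- For a saturated binomial ideal I, every shifted fiber g + T_q is
either disjoint from T = T(I) or contained in T. -/

lemma xmono_add {n : ℕ} (a b : Fin n → ℕ) : xmono (a + b) = xmono a * xmono b := by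
  have h : Finsupp.equivFunOnFinite.symm (a + b)
      = Finsupp.equivFunOnFinite.symm a + Finsupp.equivFunOnFinite.symm b := by
    ext i; rfl
  unfold xmono
  rw [h, monomial_mul, one_mul]

theorem stmt_1 {n : ℕ} (I : Ideal (MvPolynomial (Fin n) ℂ)) (hI : IsSaturated I)
    (g : Fin n → ℕ) (q : (Fin n → ℤ) ⧸ KofI I) :
    ((fun a => g + a) '' fiber (KofI I) (TofI I) q) ∩ TofI I = ∅ ∨
      ((fun a => g + a) '' fiber (KofI I) (TofI I) q) ⊆ TofI I := by
  rcases Set.eq_empty_or_nonempty (((fun a => g + a) '' fiber (KofI I) (TofI I) q) ∩ TofI I)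
    with h | ⟨x, hx1, hx2⟩
  · left; exact h
  right
  obtain ⟨a, ⟨haT, haq⟩, rfl⟩ := hx1
  rintro _ ⟨b, ⟨hbT, hbq⟩, rfl⟩
  have hk : vtoZ b - vtoZ a ∈ KofI I := by
    have h' := haq.trans hbq.symm
    rw [QuotientAddGroup.eq] at h'
    simpa [sub_eq_neg_add, add_comm] using h'
  obtain ⟨lb, la, hlb, hla, hmem⟩ := hI.2 b hbT a haT hk
  intro hgb
  apply hx2
  have h1 : xmono g * (lb • xmono b - la • xmono a) ∈ I := I.mul_mem_left _ hmem
  have h2 : xmono g * (lb • xmono b - la • xmono a)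
      = lb • xmono (g + b) - la • xmono (g + a) := by
    rw [xmono_add, xmono_add, mul_sub, mul_smul_comm, mul_smul_comm]
  rw [h2] at h1
  have h3 : C la * xmono (g + a) ∈ I := by
    have h5 := I.sub_mem (I.mul_mem_left (C lb) hgb) h1
    have h6 : C lb * xmono ((fun a => g + a) b) - (lb • xmono (g + b) - la • xmono (g + a))
        = C la * xmono (g + a) := by
      simp [smul_eq_C_mul]
    rwa [h6] at h5
  have h4 := I.mul_mem_left (C la⁻¹) h3
  rwa [← mul_assoc, ← C_mul, inv_mul_cancel₀ hla, C_1, one_mul] at h4
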